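/- Let τ̄ ≤ −1 and let α : (−∞, τ̄] → ℝ be continuously differentiable with α(τ) → 0 as τ → −∞. Define A(τ) := sup_{σ ≤ τ} |α(σ)| and assume A(τ) > 0 for all τ ≤ τ̄. Suppose there is a function ε : (−∞, τ̄] → [0, ∞) with ε(τ) → 0 as τ → −∞ such that |α'(τ) + 2·α(τ)²| ≤ ε(τ)·A(τ)² for all τ ≤ τ̄. Then lim_{τ → −∞} τ·α(τ) = 1/2; equivalently, α(τ) = 1/((2 + o(1))·τ) as τ → −∞. -/

import Mathlib

open Filter

/-- The ODE asymptotics of Section 5: α'(τ) = −2α(τ)² + o(A(τ)²) implies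
α(τ) = 1/((2+o(1))τ), i.e. τ·α(τ) → 1/2 as τ → −∞. -/
theorem neutral_mode_ode_asymptotics
    (τb : ℝ) (hτb : τb ≤ -1)
    (α A ε : ℝ → ℝ)
    (hdiff : ∀ τ ≤ τb, DifferentiableAt ℝ α τ)
    (hderiv_cont : ContinuousOn (deriv α) (Set.Iic τb))
    (hα_lim : Tendsto α atBot (nhds 0))
    (hA : ∀ τ ≤ τb, A τ = sSup {y : ℝ | ∃ σ ≤ τ, y = |α σ|})
    (hApos : ∀ τ ≤ τb, 0 < A τ)
    (hε_nonneg : ∀ τ ≤ τb, 0 ≤ ε τ)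
    (hε_lim : Tendsto ε atBot (nhds 0))
    (hmain : ∀ τ ≤ τb, |deriv α τ + 2 * (α τ) ^ 2| ≤ ε τ * (A τ) ^ 2) :
    Tendsto (fun τ => τ * α τ) atBot (nhds (1/2)) := by
  have hcont : ContinuousOn α (Set.Iic τb) :=
    fun τ hτ => ((hdiff τ hτ).continuousAt).continuousWithinAt
  -- smallness of α far in the past
  have hαsmall : ∀ c > (0:ℝ), ∃ M, ∀ s ≤ M, |α s| < c := by
    intro c hc
    have h := Metric.tendsto_nhds.mp hα_lim c hc
    simp only [Real.dist_eq, sub_zero] at h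
    exact eventually_atBot.mp h
  -- boundedness of the sup-defining set
  have hbdd : ∀ τ, τ ≤ τb → BddAbove {y : ℝ | ∃ σ ≤ τ, y = |α σ|} := by
    intro τ hτ
    obtain ⟨M, hM⟩ := hαsmall 1 one_pos
    obtain ⟨C, hC⟩ := (isCompact_Icc (a := min M τ) (b := τ)).exists_bound_of_continuousOn
      (hcont.mono (fun x hx => le_trans hx.2 hτ))
    refine ⟨max 1 C, ?_⟩
    rintro y ⟨s, hs, rfl⟩
    rcases le_or_gt s M with h | h
    · exact le_max_of_le_left (hM s h).le
    · have := hC s ⟨le_of_lt (lt_of_le_of_lt (min_le_left _ _) h), hs⟩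
      rw [Real.norm_eq_abs] at this
      exact le_max_of_le_right this
  have hmem : ∀ τ, τ ≤ τb → ∀ σ, σ ≤ τ → |α σ| ≤ A τ := by
    intro τ hτ σ hσ
    rw [hA τ hτ]
    exact le_csSup (hbdd τ hτ) ⟨σ, hσ, rfl⟩
  have hmono : ∀ σ τ, σ ≤ τ → τ ≤ τb → A σ ≤ A τ := by
    intro σ τ hστ hτ
    rw [hA σ (hστ.trans hτ), hA τ hτ]
    exact csSup_le_csSup (hbdd τ hτ) ⟨|α σ|, σ, le_refl σ, rfl⟩
      (fun y ⟨s, hs, hy⟩ => ⟨s, hs.trans hστ, hy⟩)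
  -- the sup is attained
  have hattain : ∀ τ, τ ≤ τb → ∃ σ ≤ τ, |α σ| = A τ := by
    intro τ hτ
    obtain ⟨M0, hM0⟩ := hαsmall (A τ / 2) (half_pos (hApos τ hτ))
    obtain ⟨σ, hσmem, hσmax⟩ := isCompact_Icc.exists_isMaxOn
      (Set.nonempty_Icc.mpr (min_le_right M0 τ))
      ((hcont.mono (fun x hx => le_trans hx.2 hτ)).abs)
    refine ⟨σ, hσmem.2, le_antisymm (hmem τ hτ σ hσmem.2) ?_⟩
    have h1 : A τ ≤ max (A τ / 2) |α σ| := by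
      calc A τ = sSup {y : ℝ | ∃ σ' ≤ τ, y = |α σ'|} := hA τ hτ
        _ ≤ max (A τ / 2) |α σ| := by
          refine csSup_le ⟨|α τ|, τ, le_refl τ, rfl⟩ ?_
          rintro y ⟨s, hs, rfl⟩
          rcases le_or_gt s (min M0 τ) with h | h
          · exact le_max_of_le_left (hM0 s (h.trans (min_le_left _ _))).le
          · exact le_max_of_le_right (hσmax ⟨h.le, hs⟩)
    rcases max_cases (A τ / 2) |α σ| with ⟨heq, _⟩ | ⟨heq, _⟩
    · rw [heq] at h1; linarith [hApos τ hτ]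
    · rwa [heq] at h1
  -- pick τ0 so that ε < 2 in the past
  obtain ⟨T2', hT2'⟩ : ∃ M, ∀ s ≤ M, ε s < 2 := by
    have h := Metric.tendsto_nhds.mp hε_lim 2 two_pos
    simp only [Real.dist_eq, sub_zero] at h
    obtain ⟨M, hM⟩ := eventually_atBot.mp h
    exact ⟨M, fun s hs => lt_of_le_of_lt (le_abs_self _) (hM s hs)⟩
  set τ0 := min T2' τb with hτ0def
  have hτ0b : τ0 ≤ τb := min_le_right _ _
  -- key step: A = |α| on (-∞, τ0]
  have hkey : ∀ τ, τ ≤ τ0 → A τ = |α τ| := by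
    intro τ hτ
    have hττb : τ ≤ τb := hτ.trans hτ0b
    obtain ⟨σ, hστ, hσ⟩ := hattain τ hττb
    rcases eq_or_lt_of_le hστ with rfl | hlt
    · exact hσ.symm
    · exfalso
      have hσb : σ ≤ τb := hστ.trans hττb
      have hApos' := hApos τ hττb
      have hασ : α σ ≠ 0 := by
        intro h0; rw [h0, abs_zero] at hσ; linarith
      have hmax : IsLocalMax (fun s => α s ^ 2) σ := by
        filter_upwards [Iio_mem_nhds hlt] with s hs
        have h1 : |α s| ≤ |α σ| := hσ ▸ hmem τ hττb s hs.le
        calc α s ^ 2 = |α s| ^ 2 := (sq_abs _).symm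
          _ ≤ |α σ| ^ 2 := by nlinarith [abs_nonneg (α s)]
          _ = α σ ^ 2 := sq_abs _
      have hderiv0 : deriv α σ = 0 := by
        have h2 : deriv (fun s => α s ^ 2) σ = ↑2 * α σ ^ 1 * deriv α σ :=
          (((hdiff σ hσb).hasDerivAt).pow 2).deriv
        have h3 := hmax.deriv_eq_zero
        rw [h2] at h3
        rcases mul_eq_zero.mp h3 with h | h
        · rcases mul_eq_zero.mp h with h' | h'
          · norm_num at h'
          · rw [pow_one] at h'; exact absurd h' hασ
        · exact h
      have hAσ : A σ = |α σ| :=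
        le_antisymm (hσ ▸ hmono σ τ hστ hττb) (hmem σ hσb σ (le_refl σ))
      have hb := hmain σ hσb
      rw [hderiv0, zero_add, hAσ, sq_abs] at hb
      have hεσ : ε σ < 2 := hT2' σ (hστ.trans (hτ.trans (min_le_left _ _)))
      have hsq : 0 < α σ ^ 2 := by positivity
      rw [abs_of_nonneg (by positivity)] at hb
      nlinarith [mul_lt_mul_of_pos_right hεσ hsq]
  have hne : ∀ τ, τ ≤ τ0 → α τ ≠ 0 := by
    intro τ hτ h0
    have h := hApos τ (hτ.trans hτ0b)
    rw [hkey τ hτ, h0, abs_zero] at h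
    exact lt_irrefl 0 h
  -- derivative of 1/α
  set φ := fun s => -(deriv α s) / α s ^ 2 with hφdef
  have hφderiv : ∀ s, s ≤ τ0 → HasDerivAt (fun t => (α t)⁻¹) (φ s) s := by
    intro s hs
    exact ((hdiff s (hs.trans hτ0b)).hasDerivAt).inv (hne s hs)
  have hφbound : ∀ s, s ≤ τ0 → |φ s - 2| ≤ ε s := by
    intro s hs
    have hsb := hs.trans hτ0b
    have h1 := hmain s hsb
    rw [hkey s hs, sq_abs] at h1
    have h2 : (0:ℝ) < α s ^ 2 := by
      have := hne s hs; positivity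
    have h3 : φ s - 2 = -(deriv α s + 2 * α s ^ 2) / α s ^ 2 := by
      rw [hφdef]
      field_simp [hne s hs]
      ring
    rw [h3, abs_div, abs_neg, abs_of_pos h2, div_le_iff₀ h2]
    exact h1
  have hφcont : ContinuousOn φ (Set.Iic τ0) := by
    apply ContinuousOn.div
    · exact (hderiv_cont.mono (Set.Iic_subset_Iic.mpr hτ0b)).neg
    · exact (hcont.mono (Set.Iic_subset_Iic.mpr hτ0b)).pow 2
    · intro x hx
      exact pow_ne_zero 2 (hne x hx)
  have hint : ∀ τ T, τ ≤ T → T ≤ τ0 → IntervalIntegrable φ MeasureTheory.volume τ T := by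
    intro τ T hτT hT
    apply ContinuousOn.intervalIntegrable
    apply hφcont.mono
    rw [Set.uIcc_of_le hτT]
    exact fun x hx => Set.mem_Iic.mpr (hx.2.trans hT)
  have hFTC : ∀ τ T, τ ≤ T → T ≤ τ0 →
      ∫ s in τ..T, φ s = (α T)⁻¹ - (α τ)⁻¹ := by
    intro τ T hτT hT
    apply intervalIntegral.integral_eq_sub_of_hasDerivAt
    · intro x hx
      rw [Set.uIcc_of_le hτT] at hx
      exact hφderiv x (hx.2.trans hT)
    · exact hint τ T hτT hT
  -- the integrated error estimate
  have herr : ∀ η, 0 < η → ∀ T, T ≤ τ0 → (∀ s, s ≤ T → ε s ≤ η) → ∀ τ, τ ≤ T →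
      |(α T)⁻¹ - (α τ)⁻¹ - 2 * (T - τ)| ≤ η * (T - τ) := by
    intro η hη T hT hεT τ hτT
    have h1 : (∫ s in τ..T, (φ s - 2)) = (α T)⁻¹ - (α τ)⁻¹ - 2 * (T - τ) := by
      rw [intervalIntegral.integral_sub (hint τ T hτT hT) intervalIntegrable_const,
        hFTC τ T hτT hT, intervalIntegral.integral_const, smul_eq_mul]
      ring
    rw [← h1]
    calc |∫ s in τ..T, (φ s - 2)| ≤ η * |T - τ| := by
          rw [← Real.norm_eq_abs]
          apply intervalIntegral.norm_integral_le_of_norm_le_const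
          intro x hx
          rw [Set.uIoc_of_le hτT] at hx
          have hxT : x ≤ T := hx.2
          rw [Real.norm_eq_abs]
          exact le_trans (hφbound x (hxT.trans hT)) (hεT x hxT)
      _ = η * (T - τ) := by rw [abs_of_nonneg (sub_nonneg.mpr hτT)]
  -- the limit of (1/α)/τ
  have hg : Tendsto (fun τ => (α τ)⁻¹ / τ) atBot (nhds 2) := by
    rw [Metric.tendsto_nhds]
    intro η' hη'
    obtain ⟨M1, hM1⟩ : ∃ M, ∀ s ≤ M, ε s ≤ η' / 4 := by
      have h := Metric.tendsto_nhds.mp hε_lim (η' / 4) (by positivity)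
      simp only [Real.dist_eq, sub_zero] at h
      obtain ⟨M, hM⟩ := eventually_atBot.mp h
      exact ⟨M, fun s hs => (le_abs_self _).trans (hM s hs).le⟩
    set T := min M1 τ0 with hTdef
    have hTτ0 : T ≤ τ0 := min_le_right _ _
    set C := |(α T)⁻¹ - 2 * T| with hCdef
    have hC0 : 0 ≤ C := abs_nonneg _
    rw [eventually_atBot]
    refine ⟨min T (min (-|T|) (-((4 * C + η') / η'))), fun τ hτ => ?_⟩
    have hτT : τ ≤ T := hτ.trans (min_le_left _ _)
    have hτ1 : |T| ≤ -τ := by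
      have h := hτ.trans ((min_le_right _ _).trans (min_le_left _ _))
      linarith
    have hτ2 : 4 * C + η' ≤ η' * (-τ) := by
      have h := hτ.trans ((min_le_right _ _).trans (min_le_right _ _))
      have h2 : (4 * C + η') / η' ≤ -τ := by linarith
      rw [div_le_iff₀ hη'] at h2
      linarith [h2]
    have hτneg : τ < 0 := by nlinarith
    have hτne : τ ≠ 0 := ne_of_lt hτneg
    have hr := herr (η' / 4) (by positivity) T hTτ0
      (fun s hs => hM1 s (hs.trans (min_le_left _ _))) τ hτT
    have hid : (α τ)⁻¹ / τ - 2 = ((α τ)⁻¹ - 2 * τ) / τ := by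
      rw [sub_div, mul_div_assoc, div_self hτne, mul_one]
    rw [Real.dist_eq, hid, abs_div, abs_of_neg hτneg, div_lt_iff₀ (by linarith : (0:ℝ) < -τ)]
    have hb1 : |(α τ)⁻¹ - 2 * τ| ≤ C + (η' / 4) * (T - τ) := by
      have hrw : (α τ)⁻¹ - 2 * τ =
          ((α T)⁻¹ - 2 * T) - ((α T)⁻¹ - (α τ)⁻¹ - 2 * (T - τ)) := by ring
      rw [hrw]
      calc |((α T)⁻¹ - 2 * T) - ((α T)⁻¹ - (α τ)⁻¹ - 2 * (T - τ))|
          ≤ |(α T)⁻¹ - 2 * T| + |(α T)⁻¹ - (α τ)⁻¹ - 2 * (T - τ)| := abs_sub _ _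
        _ ≤ C + (η' / 4) * (T - τ) := add_le_add le_rfl hr
    have hTu : T ≤ -τ := le_trans (le_abs_self T) hτ1
    nlinarith [mul_le_mul_of_nonneg_left hTu hη'.le,
      mul_neg_of_pos_of_neg hη' hτneg]
  -- conclude
  have hfin := hg.inv₀ two_ne_zero
  have heq : (fun τ => τ * α τ) = fun τ => ((α τ)⁻¹ / τ)⁻¹ := by
    funext τ
    rw [inv_div, div_eq_mul_inv, inv_inv]
  rw [heq, one_div]
  exact hfin
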